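/- For any p with ln(2)/2 < p < 1/2, the equation θ·ln(θ/p) − θ + p − (θ − 1/2)·ln(2) = 0 has a unique solution θ_th in the interval (1/2, 2p), and moreover the function θ ↦ θ·ln(θ/p) − θ + p − (θ − 1/2)·ln(2) is strictly decreasing on (0, 2p). -/

import Mathlib

open Real Set

theorem medium_price_threshold_exists_unique (p : ℝ)
    (hp1 : Real.log 2 / 2 < p) (hp2 : p < 1 / 2) :
    let f : ℝ → ℝ := fun θ => θ * Real.log (θ / p) - θ + p - (θ - 1 / 2) * Real.log 2
    (∃! θ : ℝ, θ ∈ Ioo (1 / 2 : ℝ) (2 * p) ∧ f θ = 0) ∧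
    StrictAntiOn f (Ioo (0:ℝ) (2 * p)) := by
  intro f
  have hlog2 : (0:ℝ) < Real.log 2 := Real.log_pos (by norm_num)
  have hlog2' : (1:ℝ)/2 < Real.log 2 := by
    have := Real.log_two_gt_d9; linarith
  have hp0 : 0 < p := lt_trans (by positivity) hp1
  have hhalf : (1:ℝ)/2 < 2 * p := by linarith
  -- derivative for all x > 0
  have hderiv : ∀ x : ℝ, 0 < x →
      HasDerivAt f (Real.log (x/p) - Real.log 2) x := by
    intro x hx
    have hxp : x / p ≠ 0 := by positivity
    have hdiv : HasDerivAt (fun θ : ℝ => θ / p) (1/p) x := by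
      simpa using (hasDerivAt_id x).div_const p
    have hlog : HasDerivAt (fun θ : ℝ => Real.log (θ / p)) ((x/p)⁻¹ * (1/p)) x := by
      have := (Real.hasDerivAt_log hxp).comp x hdiv; exact this
    have hlog' : HasDerivAt (fun θ : ℝ => Real.log (θ / p)) (1/x) x := by
      convert hlog using 1
      field_simp
    have h1 : HasDerivAt (fun θ : ℝ => θ * Real.log (θ / p))
        (1 * Real.log (x/p) + x * (1/x)) x := (hasDerivAt_id x).mul hlog'
    have h2 : HasDerivAt (fun θ : ℝ => (θ - 1/2) * Real.log 2) (Real.log 2) x := by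
      exact (((hasDerivAt_id x).sub_const (1/2)).mul_const (Real.log 2)).congr_deriv (one_mul _)
    have := ((h1.sub (hasDerivAt_id x)).add_const p).sub h2
    refine this.congr_deriv ?_
    rw [mul_one_div_cancel hx.ne']; ring
  have hanti : StrictAntiOn f (Ioo (0:ℝ) (2 * p)) := by
    apply StrictAntiOn.mono (s := Ioo (0:ℝ) (2*p)) ?_ (subset_refl _)
    apply strictAntiOn_of_deriv_neg (convex_Ioo _ _)
    · exact fun x hx => ((hderiv x hx.1).differentiableAt.continuousAt.continuousWithinAt)
    · intro x hx
      rw [interior_Ioo] at hx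
      rw [(hderiv x hx.1).deriv]
      have h1 : x / p < 2 := (div_lt_iff₀ hp0).2 (by linarith [hx.2])
      have h2 : 0 < x / p := div_pos hx.1 hp0
      have := Real.log_lt_log h2 h1
      linarith
  refine ⟨?_, hanti⟩
  -- values at endpoints
  have hfa : 0 < f (1/2) := by
    have hlog2p : Real.log ((1/2)/p) = - Real.log (2*p) := by
      rw [show (1:ℝ)/2/p = (2*p)⁻¹ by field_simp, Real.log_inv]
    have hub : Real.log (2*p) < 2*p - 1 :=
      Real.log_lt_sub_one_of_pos (by linarith) (by intro h; linarith [h ▸ hp2])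
    show 0 < 1/2 * Real.log ((1/2)/p) - 1/2 + p - (1/2 - 1/2) * Real.log 2
    rw [hlog2p]
    linarith
  have hfb : f (2*p) < 0 := by
    have h2 : Real.log (2*p/p) = Real.log 2 := by
      rw [show 2*p/p = (2:ℝ) by field_simp]
    show 2*p * Real.log (2*p/p) - 2*p + p - (2*p - 1/2) * Real.log 2 < 0
    rw [h2]; ring_nf; linarith
  have hcont : ContinuousOn f (Icc (1/2 : ℝ) (2*p)) := by
    intro x hx
    exact ((hderiv x (by linarith [hx.1])).differentiableAt.continuousAt.continuousWithinAt)
  have hiv := intermediate_value_Ioo' (le_of_lt hhalf) hcont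
  have h0 : (0:ℝ) ∈ Ioo (f (2*p)) (f (1/2)) := ⟨hfb, hfa⟩
  obtain ⟨θ, hθmem, hθ⟩ := hiv h0
  refine ⟨θ, ⟨hθmem, hθ⟩, ?_⟩
  rintro θ' ⟨hθ'mem, hθ'⟩
  have hsub : ∀ y ∈ Ioo (1/2 : ℝ) (2*p), y ∈ Ioo (0:ℝ) (2*p) :=
    fun y hy => ⟨by linarith [hy.1], hy.2⟩
  exact hanti.injOn (hsub _ hθ'mem) (hsub _ hθmem) (by rw [hθ', hθ])
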